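/- The number of visible endpoints is a 2-approximation of the number of visible segments: for a set S of n disjoint closed segments and a point p not on any segment, if m_p is the number of segments of S visible from p and ve_p is the number of segment endpoints visible from p, then m_p ≤ ve_p ≤ 2·m_p. -/

import Mathlib

open scoped Classical

noncomputable section
namespace VisProof

abbrev P := ℝ × ℝ

def pt (x y : P) (t : ℝ) : P := (1-t) • x + t • y

@[simp] lemma pt_fst (x y : P) (t : ℝ) : (pt x y t).1 = (1-t)*x.1 + t*y.1 := rfl
@[simp] lemma pt_snd (x y : P) (t : ℝ) : (pt x y t).2 = (1-t)*x.2 + t*y.2 := rfl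
@[simp] lemma pt_zero (x y : P) : pt x y 0 = x := by ext <;> simp
@[simp] lemma pt_one (x y : P) : pt x y 1 = y := by ext <;> simp
lemma pt_self (x : P) (t : ℝ) : pt x x t = x := by ext <;> simp <;> ring

def cross (p a b : P) : ℝ := (a.1-p.1)*(b.2-p.2) - (a.2-p.2)*(b.1-p.1)

lemma cross_pt_pt (p x y : P) (s t : ℝ) :
    cross p (pt x y s) (pt x y t) = (t - s) * cross p x y := by
  simp only [cross, pt_fst, pt_snd]; ring

lemma cross_right_pt (p a x y : P) (t : ℝ) :
    cross p a (pt x y t) = (1-t) * cross p a x + t * cross p a y := by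
  simp only [cross, pt_fst, pt_snd]; ring

lemma cross_pt_left (p x y b : P) (t : ℝ) :
    cross p (pt x y t) b = (1-t) * cross p x b + t * cross p y b := by
  simp only [cross, pt_fst, pt_snd]; ring

@[simp] lemma cross_self_right (p a : P) : cross p a a = 0 := by simp [cross]; ring
@[simp] lemma cross_left_p (p b : P) : cross p p b = 0 := by simp [cross]
@[simp] lemma cross_right_p (p a : P) : cross p a p = 0 := by simp [cross]

lemma cross_swap (p a b : P) : cross p a b = - cross p b a := by simp [cross]; ring

lemma cross_ray_ray (p c d : P) (μ u : ℝ) :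
    cross p (pt p c μ) (pt p d u) = μ * u * cross p c d := by
  simp only [cross, pt_fst, pt_snd]; ring

lemma mem_segment_iff_pt {x y z : P} :
    z ∈ segment ℝ x y ↔ ∃ t, t ∈ Set.Icc (0:ℝ) 1 ∧ z = pt x y t := by
  rw [segment_eq_image]
  constructor
  · rintro ⟨t, ht, rfl⟩; exact ⟨t, ht, rfl⟩
  · rintro ⟨t, ht, rfl⟩; exact ⟨t, ht, rfl⟩

lemma mem_openSegment_iff_pt {x y z : P} :
    z ∈ openSegment ℝ x y ↔ ∃ t, t ∈ Set.Ioo (0:ℝ) 1 ∧ z = pt x y t := by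
  rw [openSegment_eq_image]
  constructor
  · rintro ⟨t, ht, rfl⟩; exact ⟨t, ht, rfl⟩
  · rintro ⟨t, ht, rfl⟩; exact ⟨t, ht, rfl⟩

lemma pt_mem_segment {x y : P} {t : ℝ} (ht : t ∈ Set.Icc (0:ℝ) 1) :
    pt x y t ∈ segment ℝ x y := mem_segment_iff_pt.2 ⟨t, ht, rfl⟩

lemma pt_mem_openSegment {x y : P} {t : ℝ} (ht : t ∈ Set.Ioo (0:ℝ) 1) :
    pt x y t ∈ openSegment ℝ x y := mem_openSegment_iff_pt.2 ⟨t, ht, rfl⟩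

lemma pt_pt (x y : P) (u s : ℝ) : pt x (pt x y u) s = pt x y (s*u) := by
  ext <;> simp [pt] <;> ring

/-- If cross p a b = 0 and a ≠ p then b lies on the line through p and a. -/
lemma exists_ratio_of_cross_eq_zero {p a b : P} (h : cross p a b = 0) (ha : a ≠ p) :
    ∃ r : ℝ, b = pt p a r := by
  have ha' : a.1 - p.1 ≠ 0 ∨ a.2 - p.2 ≠ 0 := by
    by_contra hc
    push_neg at hc
    exact ha (by ext <;> [linarith [hc.1]; linarith [hc.2]])
  simp only [cross] at h
  rcases ha' with h1 | h2
  · refine ⟨(b.1 - p.1)/(a.1 - p.1), ?_⟩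
    ext
    · simp only [pt_fst]; field_simp; ring
    · simp only [pt_snd]; field_simp; nlinarith [h]
  · refine ⟨(b.2 - p.2)/(a.2 - p.2), ?_⟩
    ext
    · simp only [pt_fst]; field_simp; nlinarith [h]
    · simp only [pt_snd]; field_simp; ring

lemma collinear_of_pt {p a : P} (u : ℝ) :
    Collinear ℝ ({p, pt p a u, a} : Set P) := by
  rw [collinear_iff_of_mem (Set.mem_insert p _)]
  refine ⟨a - p, ?_⟩
  intro q hq
  simp only [Set.mem_insert_iff, Set.mem_singleton_iff] at hq
  rcases hq with rfl | rfl | rfl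
  · exact ⟨0, by simp⟩
  · exact ⟨u, by ext <;> simp [pt] <;> ring⟩
  · exact ⟨1, by ext <;> simp⟩

/-- collinearity of p, a, b when both a and b are on the ray through q* -/
lemma collinear_of_two_pt {p c : P} (u v : ℝ) :
    Collinear ℝ ({p, pt p c u, pt p c v} : Set P) := by
  rw [collinear_iff_of_mem (Set.mem_insert p _)]
  refine ⟨c - p, ?_⟩
  intro q hq
  simp only [Set.mem_insert_iff, Set.mem_singleton_iff] at hq
  rcases hq with rfl | rfl | rfl
  · exact ⟨0, by simp⟩
  · exact ⟨u, by ext <;> simp [pt] <;> ring⟩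
  · exact ⟨v, by ext <;> simp [pt] <;> ring⟩

lemma collinear_of_cross_eq_zero {p a b : P} (h : cross p a b = 0) :
    Collinear ℝ ({p, a, b} : Set P) := by
  by_cases ha : a = p
  · subst ha
    rw [collinear_iff_of_mem (Set.mem_insert a _)]
    refine ⟨b - a, ?_⟩
    intro q hq
    simp only [Set.mem_insert_iff, Set.mem_singleton_iff] at hq
    rcases hq with rfl | rfl | rfl
    · exact ⟨0, by simp⟩
    · exact ⟨0, by simp⟩
    · exact ⟨1, by simp⟩
  · obtain ⟨r, hr⟩ := exists_ratio_of_cross_eq_zero h ha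
    rw [hr, Set.pair_comm a (pt p a r)]
    exact collinear_of_pt r

lemma pt_left_injective {p q : P} (hq : q ≠ p) {u v : ℝ} (h : pt p q u = pt p q v) : u = v := by
  have h1 : (1-u)*p.1 + u*q.1 = (1-v)*p.1 + v*q.1 := congrArg Prod.fst h
  have h2 : (1-u)*p.2 + u*q.2 = (1-v)*p.2 + v*q.2 := congrArg Prod.snd h
  have hq' : q.1 - p.1 ≠ 0 ∨ q.2 - p.2 ≠ 0 := by
    by_contra hc; push_neg at hc
    exact hq (by ext <;> [linarith [hc.1]; linarith [hc.2]])
  rcases hq' with h' | h'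
  · have : (u - v) * (q.1 - p.1) = 0 := by linarith
    rcases mul_eq_zero.1 this with h'' | h''
    · linarith
    · exact absurd h'' h'
  · have : (u - v) * (q.2 - p.2) = 0 := by linarith
    rcases mul_eq_zero.1 this with h'' | h''
    · linarith
    · exact absurd h'' h'

/-- if z is on the line through p and q (q ≠ p) then z = pt p q μ with explicit μ. -/
lemma ratio_formula {p q z : P} (hq : (q.1-p.1)^2 + (q.2-p.2)^2 ≠ 0)
    (h : cross p q z = 0) :
    z = pt p q (((z.1-p.1)*(q.1-p.1)+(z.2-p.2)*(q.2-p.2))/((q.1-p.1)^2+(q.2-p.2)^2)) := by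
  simp only [cross] at h
  ext
  · simp only [pt_fst]; field_simp; linear_combination (-(q.2-p.2)) * h
  · simp only [pt_snd]; field_simp; linear_combination (q.1-p.1) * h

lemma norm_ne_zero_of_ne {p q : P} (hq : q ≠ p) : (q.1-p.1)^2 + (q.2-p.2)^2 ≠ 0 := by
  have hq' : q.1 - p.1 ≠ 0 ∨ q.2 - p.2 ≠ 0 := by
    by_contra hc; push_neg at hc
    exact hq (by ext <;> [linarith [hc.1]; linarith [hc.2]])
  rcases hq' with h | h <;> positivity



def Seg (e : P × P) : Set P := segment ℝ e.1 e.2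

def Epts (S : Finset (P × P)) : Finset P := S.image Prod.fst ∪ S.image Prod.snd

lemma fst_mem_Epts {S : Finset (P × P)} {e : P × P} (he : e ∈ S) : e.1 ∈ Epts S := by
  exact Finset.mem_union_left _ (Finset.mem_image_of_mem Prod.fst he)

lemma snd_mem_Epts {S : Finset (P × P)} {e : P × P} (he : e ∈ S) : e.2 ∈ Epts S := by
  exact Finset.mem_union_right _ (Finset.mem_image_of_mem Prod.snd he)

/-- q is a point of e visible from p (w.r.t. obstacles S). -/
def VisPt (S : Finset (P × P)) (p : P) (e : P × P) (q : P) : Prop :=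
  ∀ e' ∈ S, e' ≠ e → openSegment ℝ p q ∩ Seg e' = ∅

/-- Crossing lemma: if t0 is a limit of visible parameters on the segment [A,B] = e,
then any point of another segment e' lying strictly between p and pt A B t0 must be an
endpoint of e'. -/
lemma crossing
    (S : Finset (P × P)) (p : P)
    (hp : ∀ e ∈ S, p ∉ Seg e)
    (hgen : ∀ a ∈ Epts S, ∀ b ∈ Epts S, a ≠ b → ¬ Collinear ℝ ({p, a, b} : Set P))
    {e : P × P} {A B : P} (hAB : segment ℝ A B = Seg e)
    {V : Set ℝ} (hV : ∀ t ∈ V, t ∈ Set.Icc (0:ℝ) 1 ∧ VisPt S p e (pt A B t))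
    {t0 : ℝ} (ht0 : t0 ∈ closure V)
    {e' : P × P} (he' : e' ∈ S) (hne : e' ≠ e)
    {z : P} (hz1 : z ∈ Seg e') (hz2 : z ∈ openSegment ℝ p (pt A B t0)) :
    z = e'.1 ∨ z = e'.2 := by
  by_contra hcon
  push_neg at hcon
  obtain ⟨hz1', hz2'⟩ := hcon
  set q0 : P := pt A B t0 with hq0def
  -- q0 ≠ p
  have hq0p : q0 ≠ p := by
    rintro h
    rw [h] at hz2
    rw [openSegment_same] at hz2
    exact hp e' he' (hz2 ▸ hz1)
  -- e' is nondegenerate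
  have hee : e'.1 ≠ e'.2 := by
    intro h
    have : Seg e' = {e'.1} := by
      simp [Seg, ← h, segment_same]
    rw [this] at hz1
    exact hz1' hz1
  -- parameters
  obtain ⟨s0, hs0I, hs0⟩ := mem_segment_iff_pt.1 hz1
  have hs0I' : s0 ∈ Set.Ioo (0:ℝ) 1 := by
    refine ⟨lt_of_le_of_ne hs0I.1 ?_, lt_of_le_of_ne hs0I.2 ?_⟩
    · intro h; exact hz1' (by rw [hs0, ← h, pt_zero])
    · intro h; exact hz2' (by rw [hs0, h, pt_one])
  obtain ⟨u0, hu0I, hu0⟩ := mem_openSegment_iff_pt.1 hz2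
  -- the two affine side functions
  set c1 : ℝ → ℝ := fun t => cross p (pt A B t) e'.1 with hc1def
  set c2 : ℝ → ℝ := fun t => cross p (pt A B t) e'.2 with hc2def
  have hcont1 : Continuous c1 := by
    simp only [hc1def, cross, pt_fst, pt_snd]; fun_prop
  have hcont2 : Continuous c2 := by
    simp only [hc2def, cross, pt_fst, pt_snd]; fun_prop
  -- key equation at t0
  have hkey : (1 - s0) * c1 t0 + s0 * c2 t0 = 0 := by
    have h1 : cross p q0 z = 0 := by
      rw [hu0, cross_right_pt]; simp
    rw [hs0, cross_right_pt] at h1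
    have e1 : cross p q0 e'.1 = c1 t0 := rfl
    have e2 : cross p q0 e'.2 = c2 t0 := rfl
    rw [e1, e2] at h1
    linarith
  -- both are nonzero
  have hc1ne : c1 t0 ≠ 0 := by
    intro h
    have h2 : c2 t0 = 0 := by
      have := hkey
      rw [h] at this
      have : s0 * c2 t0 = 0 := by linarith
      rcases mul_eq_zero.1 this with h' | h'
      · exact absurd h' (ne_of_gt hs0I'.1)
      · exact h'
    obtain ⟨r1, hr1⟩ := exists_ratio_of_cross_eq_zero h hq0p
    obtain ⟨r2, hr2⟩ := exists_ratio_of_cross_eq_zero h2 hq0p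
    refine hgen e'.1 (fst_mem_Epts he') e'.2 (snd_mem_Epts he') hee ?_
    rw [hr1, hr2]
    exact collinear_of_two_pt r1 r2
  have hc2ne : c2 t0 ≠ 0 := by
    intro h
    have h1 : c1 t0 = 0 := by
      rw [h] at hkey
      have : (1 - s0) * c1 t0 = 0 := by linarith
      rcases mul_eq_zero.1 this with h' | h'
      · exfalso; have := hs0I'.2; linarith
      · exact h'
    exact hc1ne h1
  have hd0 : c1 t0 - c2 t0 ≠ 0 := by
    intro h
    have h' : c1 t0 = c2 t0 := by linarith
    -- (1-s0) c1 + s0 c1 = c1 = 0, contradiction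
    rw [h'] at hkey
    have : c2 t0 = 0 := by nlinarith
    exact hc2ne this
  -- the moving intersection point
  set s : ℝ → ℝ := fun t => c1 t / (c1 t - c2 t) with hsdef
  have hst0 : s t0 = s0 := by
    rw [hsdef]
    field_simp
    nlinarith [hkey]
  have hscont : ContinuousAt s t0 :=
    ContinuousAt.div hcont1.continuousAt (hcont1.sub hcont2).continuousAt hd0
  set zz : ℝ → P := fun t => pt e'.1 e'.2 (s t) with hzzdef
  have hzt0 : zz t0 = z := by rw [hzzdef]; simp only [hst0]; exact hs0.symm
  -- denominator for the ratio
  set N : ℝ → ℝ := fun t => ((pt A B t).1 - p.1)^2 + ((pt A B t).2 - p.2)^2 with hNdef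
  have hNcont : Continuous N := by
    simp only [hNdef, pt_fst, pt_snd]; fun_prop
  have hN0 : N t0 ≠ 0 := norm_ne_zero_of_ne hq0p
  set μ : ℝ → ℝ := fun t =>
    (((zz t).1 - p.1)*((pt A B t).1 - p.1) + ((zz t).2 - p.2)*((pt A B t).2 - p.2)) / N t
    with hμdef
  have hμcont : ContinuousAt μ t0 := by
    apply ContinuousAt.div _ hNcont.continuousAt hN0
    have : ContinuousAt (fun t => (((zz t).1 - p.1)*((pt A B t).1 - p.1)
        + ((zz t).2 - p.2)*((pt A B t).2 - p.2))) t0 := by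
      simp only [hzzdef, pt_fst, pt_snd]
      fun_prop
    exact this
  have hμt0 : μ t0 = u0 := by
    have hzr : z = pt p q0 (μ t0) := by
      have hc : cross p q0 z = 0 := by
        rw [hu0, cross_right_pt]; simp
      have := ratio_formula hN0 hc
      rw [hμdef]
      simp only [hzt0]
      convert this using 3
    rw [hu0] at hzr
    exact (pt_left_injective hq0p hzr).symm
  -- eventually all good
  have hgood : ∀ᶠ t in nhds t0, (c1 t - c2 t ≠ 0) ∧ (N t ≠ 0) ∧
      s t ∈ Set.Ioo (0:ℝ) 1 ∧ μ t ∈ Set.Ioo (0:ℝ) 1 := by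
    have E1 : ∀ᶠ t in nhds t0, c1 t - c2 t ≠ 0 :=
      (hcont1.sub hcont2).continuousAt.eventually_ne hd0
    have E2 : ∀ᶠ t in nhds t0, N t ≠ 0 := hNcont.continuousAt.eventually_ne hN0
    have E3 : ∀ᶠ t in nhds t0, s t ∈ Set.Ioo (0:ℝ) 1 := by
      apply hscont.eventually_mem
      rw [hst0]
      exact isOpen_Ioo.mem_nhds hs0I'
    have E4 : ∀ᶠ t in nhds t0, μ t ∈ Set.Ioo (0:ℝ) 1 := by
      apply hμcont.eventually_mem
      rw [hμt0]
      exact isOpen_Ioo.mem_nhds hu0I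
    filter_upwards [E1, E2, E3, E4] with t h1 h2 h3 h4
    exact ⟨h1, h2, h3, h4⟩
  -- pick a visible parameter nearby
  rw [mem_closure_iff_nhds] at ht0
  obtain ⟨t, htE, htV⟩ := ht0 _ hgood
  obtain ⟨hd, hN, hsI, hμI⟩ := htE
  obtain ⟨htI, htvis⟩ := hV t htV
  -- zz t blocks the visible point pt A B t : contradiction
  have hzzseg : zz t ∈ Seg e' := by
    rw [hzzdef]
    exact pt_mem_segment ⟨le_of_lt hsI.1, le_of_lt hsI.2⟩
  have hcrossz : cross p (pt A B t) (zz t) = 0 := by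
    rw [hzzdef]
    simp only [cross_right_pt]
    have e1 : cross p (pt A B t) e'.1 = c1 t := rfl
    have e2 : cross p (pt A B t) e'.2 = c2 t := rfl
    rw [e1, e2, hsdef]
    field_simp
    ring
  have hzzopen : zz t ∈ openSegment ℝ p (pt A B t) := by
    have := ratio_formula hN hcrossz
    have hμeq : zz t = pt p (pt A B t) (μ t) := by
      rw [hμdef]; exact this
    rw [hμeq]
    exact pt_mem_openSegment hμI
  have := htvis e' he' hne
  rw [Set.eq_empty_iff_forall_notMem] at this
  exact this (zz t) ⟨hzzopen, hzzseg⟩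


lemma dist_pt_pt (p a b : P) (u : ℝ) :
    dist (pt p a u) (pt p b u) = |u| * dist a b := by
  rw [Prod.dist_eq, Prod.dist_eq, Real.dist_eq, Real.dist_eq, Real.dist_eq, Real.dist_eq]
  simp only [pt_fst, pt_snd]
  have h1 : (1-u)*p.1 + u*a.1 - ((1-u)*p.1 + u*b.1) = u * (a.1 - b.1) := by ring
  have h2 : (1-u)*p.2 + u*a.2 - ((1-u)*p.2 + u*b.2) = u * (a.2 - b.2) := by ring
  rw [h1, h2, abs_mul, abs_mul]
  exact (mul_max_of_nonneg _ _ (abs_nonneg u)).symm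

lemma compact_dist (K1 K2 : Set P) (h1 : IsCompact K1) (h2 : IsCompact K2)
    (hne1 : K1.Nonempty) (hne2 : K2.Nonempty) (hd : K1 ∩ K2 = ∅) :
    ∃ ε > 0, ∀ x ∈ K1, ∀ y ∈ K2, ε ≤ dist x y := by
  obtain ⟨m, hm, hmin⟩ := (h1.prod h2).exists_isMinOn (hne1.prod hne2)
    (continuous_dist.comp (continuous_fst.prodMk continuous_snd)).continuousOn
  rw [Set.mem_prod] at hm
  refine ⟨dist m.1 m.2, ?_, fun x hx y hy => ?_⟩
  · rw [gt_iff_lt, dist_pos]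
    intro h
    rw [Set.eq_empty_iff_forall_notMem] at hd
    exact hd m.1 ⟨hm.1, h ▸ hm.2⟩
  · exact hmin (Set.mk_mem_prod hx hy)


lemma isCompact_seg (x y : P) : IsCompact (segment ℝ x y) := by
  rw [segment_eq_image]
  exact (isCompact_Icc).image (by fun_prop)

/-- If no parameter beyond t0 is visible, then some other segment has a point strictly
between p and pt A B t0, and blocks some ray beyond t0. -/
lemma blocker
    (S : Finset (P × P)) (p : P)
    (hdisj : ∀ e ∈ S, ∀ e' ∈ S, e ≠ e' → Seg e ∩ Seg e' = ∅)
    (hp : ∀ e ∈ S, p ∉ Seg e)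
    {e : P × P} (he : e ∈ S) {A B : P} (hAB : segment ℝ A B = Seg e)
    {t0 : ℝ} (ht00 : 0 ≤ t0) (ht01 : t0 < 1)
    (hblock : ∀ t, t0 < t → t ≤ 1 → ¬ VisPt S p e (pt A B t)) :
    ∃ e' ∈ S, e' ≠ e ∧
      (∃ z, z ∈ Seg e' ∧ z ∈ openSegment ℝ p (pt A B t0)) ∧
      (∃ t, t0 < t ∧ t ≤ 1 ∧ (openSegment ℝ p (pt A B t) ∩ Seg e').Nonempty) := by
  set F := nhdsWithin t0 (Set.Ioi t0) with hFdef
  haveI : F.NeBot := nhdsGT_neBot t0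
  have hIoc : ∀ᶠ t in F, t ∈ Set.Ioc t0 1 :=
    Ioc_mem_nhdsGT_of_mem ⟨le_refl t0, ht01⟩
  -- pigeonhole: some e' blocks frequently
  have hfreq : ∃ e' ∈ S, e' ≠ e ∧
      (∃ᶠ t in F, t ∈ Set.Ioc t0 1 ∧ (openSegment ℝ p (pt A B t) ∩ Seg e').Nonempty) := by
    by_contra hcon
    push_neg at hcon
    have hall : ∀ᶠ t in F, ∀ e' ∈ S, e' ≠ e →
        ¬ (t ∈ Set.Ioc t0 1 ∧ (openSegment ℝ p (pt A B t) ∩ Seg e').Nonempty) := by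
      rw [Filter.eventually_all_finset]
      intro e' he'
      by_cases hne : e' = e
      · filter_upwards with t h
        exact absurd hne h
      · have := hcon e' he' hne
        have this : ∀ᶠ t in F, ¬ (t ∈ Set.Ioc t0 1 ∧ (openSegment ℝ p (pt A B t) ∩ Seg e').Nonempty) :=
          this.mono fun t h ⟨h1, h2⟩ => h2.ne_empty (h h1)
        filter_upwards [this] with t h _ 
        exact h
    have : ∀ᶠ t in F, False := by
      filter_upwards [hall, hIoc] with t hall ht
      have := hblock t ht.1 ht.2
      rw [VisPt] at this
      push_neg at this
      obtain ⟨e', he', hne, hblk⟩ := this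
      exact hall e' he' hne ⟨ht, hblk⟩
    rw [Filter.eventually_false_iff_eq_bot] at this
    exact (‹F.NeBot›).ne this
  obtain ⟨e', he', hne, hfreq⟩ := hfreq
  refine ⟨e', he', hne, ?_, ?_⟩
  swap
  · obtain ⟨t, ht, hblk⟩ := hfreq.exists
    exact ⟨t, ht.1, ht.2, hblk⟩
  -- now show a blocking point on the limit ray
  set q0 : P := pt A B t0 with hq0def
  have hq0seg : q0 ∈ Seg e := by
    rw [← hAB]; exact pt_mem_segment ⟨ht00, le_of_lt ht01⟩
  have hq0p : q0 ≠ p := fun h => hp e he (h ▸ hq0seg)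
  have hKne : (Seg e' ∩ segment ℝ p q0).Nonempty := by
    by_contra hK
    rw [Set.not_nonempty_iff_eq_empty] at hK
    obtain ⟨ε, hε, hdist⟩ := compact_dist (Seg e') (segment ℝ p q0)
      (isCompact_seg _ _) (isCompact_seg _ _)
      ⟨e'.1, left_mem_segment ℝ e'.1 e'.2⟩ ⟨p, left_mem_segment ℝ p q0⟩ hK
    -- eventually, pt A B t is within ε of q0
    have hcontq : ContinuousAt (fun t => pt A B t) t0 := by
      have : Continuous (fun t => pt A B t) := by unfold pt; fun_prop
      exact this.continuousAt
    have hev : ∀ᶠ t in F, dist (pt A B t) q0 < ε := by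
      apply Filter.Eventually.filter_mono nhdsWithin_le_nhds
      have := Metric.tendsto_nhds.1 hcontq.tendsto ε hε
      exact this
    obtain ⟨t, hdlt, _, hblk⟩ := (hev.and_frequently hfreq).exists
    obtain ⟨x, hx1, hx2⟩ := hblk
    obtain ⟨u, huI, hu⟩ := mem_openSegment_iff_pt.1 hx1
    have hy : pt p q0 u ∈ segment ℝ p q0 :=
      pt_mem_segment ⟨le_of_lt huI.1, le_of_lt huI.2⟩
    have := hdist x hx2 (pt p q0 u) hy
    rw [hu] at this
    rw [dist_pt_pt] at this
    have habs : |u| ≤ 1 := by rw [abs_le]; constructor <;> [linarith [huI.1]; linarith [huI.2]]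
    have : ε ≤ dist (pt A B t) q0 := by
      calc ε ≤ |u| * dist (pt A B t) q0 := this
        _ ≤ 1 * dist (pt A B t) q0 := by
            apply mul_le_mul_of_nonneg_right habs dist_nonneg
        _ = dist (pt A B t) q0 := one_mul _
    linarith
  obtain ⟨z, hz1, hz2⟩ := hKne
  refine ⟨z, hz1, ?_⟩
  obtain ⟨v, hvI, hv⟩ := mem_segment_iff_pt.1 hz2
  have hvne0 : v ≠ 0 := by
    intro h
    rw [h, pt_zero] at hv
    exact hp e' he' (hv ▸ hz1)
  have hvne1 : v ≠ 1 := by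
    intro h
    rw [h, pt_one] at hv
    have : z ∈ Seg e' ∩ Seg e := ⟨hz1, hv ▸ hq0seg⟩
    rw [hdisj e' he' e he (by exact hne)] at this
    exact this
  rw [hv]
  exact pt_mem_openSegment ⟨lt_of_le_of_ne hvI.1 (Ne.symm hvne0), lt_of_le_of_ne hvI.2 hvne1⟩


def VisEnd (S : Finset (P × P)) (p : P) (a : P) : Prop :=
  ∃ e ∈ S, (a = e.1 ∨ a = e.2) ∧ ∀ e' ∈ S, e' ≠ e → openSegment ℝ p a ∩ Seg e' = ∅

/-- The invariant satisfied by the endpoint charged to a visible segment e. -/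
def Inv (S : Finset (P × P)) (p : P) (e : P × P) (a : P) : Prop :=
  a ∈ Epts S ∧ VisEnd S p a ∧
  (((a = e.1 ∨ a = e.2) ∧ ∀ x ∈ Seg e, cross p a x ≤ 0)
   ∨ (∃ q0, q0 ∈ Seg e ∧ a ∈ openSegment ℝ p q0 ∧
        (∀ e1 ∈ S, e1 ≠ e → ∀ z ∈ Seg e1, z ∈ openSegment ℝ p q0 → z = e1.1 ∨ z = e1.2) ∧
        (∀ e1 ∈ S, e1 ≠ e → a ∈ Seg e1 → ∃ x ∈ Seg e1, 0 < cross p a x)))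

lemma key
    (S : Finset (P × P)) (p : P)
    (hdisj : ∀ e ∈ S, ∀ e' ∈ S, e ≠ e' → Seg e ∩ Seg e' = ∅)
    (hp : ∀ e ∈ S, p ∉ Seg e)
    (hgen : ∀ a ∈ Epts S, ∀ b ∈ Epts S, a ≠ b → ¬ Collinear ℝ ({p, a, b} : Set P))
    {e : P × P} (he : e ∈ S) (hvis : ∃ q ∈ Seg e, VisPt S p e q) :
    ∃ a, Inv S p e a := by
  obtain ⟨A, B, hAB, hor, hends⟩ : ∃ A B : P, segment ℝ A B = Seg e ∧ 0 ≤ cross p A B ∧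
      ((A = e.1 ∧ B = e.2) ∨ (A = e.2 ∧ B = e.1)) := by
    rcases le_or_gt 0 (cross p e.1 e.2) with h | h
    · exact ⟨e.1, e.2, rfl, h, Or.inl ⟨rfl, rfl⟩⟩
    · refine ⟨e.2, e.1, segment_symm ℝ e.2 e.1, ?_, Or.inr ⟨rfl, rfl⟩⟩
      rw [cross_swap]; linarith
  have hAepts : A ∈ Epts S := by
    rcases hends with ⟨h1, _⟩ | ⟨h1, _⟩
    · exact h1 ▸ fst_mem_Epts he
    · exact h1 ▸ snd_mem_Epts he
  have hBepts : B ∈ Epts S := by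
    rcases hends with ⟨_, h2⟩ | ⟨_, h2⟩
    · exact h2 ▸ snd_mem_Epts he
    · exact h2 ▸ fst_mem_Epts he
  have hBe : B = e.1 ∨ B = e.2 := by
    rcases hends with ⟨_, h2⟩ | ⟨_, h2⟩
    · exact Or.inr h2
    · exact Or.inl h2
  set V : Set ℝ := {t | t ∈ Set.Icc (0:ℝ) 1 ∧ VisPt S p e (pt A B t)} with hVdef
  have hVprop : ∀ t ∈ V, t ∈ Set.Icc (0:ℝ) 1 ∧ VisPt S p e (pt A B t) := fun t ht => ht
  have hVne : V.Nonempty := by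
    obtain ⟨q, hq, hqvis⟩ := hvis
    rw [← hAB] at hq
    obtain ⟨t, htI, ht⟩ := mem_segment_iff_pt.1 hq
    exact ⟨t, htI, ht ▸ hqvis⟩
  have hVbdd : BddAbove V := ⟨1, fun t ht => ht.1.2⟩
  set ts : ℝ := sSup V with htsdef
  have htscl : ts ∈ closure V := csSup_mem_closure hVne hVbdd
  have hts0 : 0 ≤ ts := by
    obtain ⟨t, ht⟩ := hVne
    exact le_trans ht.1.1 (le_csSup hVbdd ht)
  have hts1 : ts ≤ 1 := csSup_le hVne (fun t ht => ht.1.2)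
  rcases eq_or_lt_of_le hts1 with hcase | hcase
  · -- Case 1 : the counterclockwise endpoint B is visible
    have hcl1 : (1:ℝ) ∈ closure V := hcase ▸ htscl
    have hBseg : B ∈ Seg e := by rw [← hAB]; exact right_mem_segment ℝ A B
    have hBp : B ≠ p := fun h => hp e he (h ▸ hBseg)
    have hBvis : ∀ e' ∈ S, e' ≠ e → openSegment ℝ p B ∩ Seg e' = ∅ := by
      intro e' he' hne
      rw [Set.eq_empty_iff_forall_notMem]
      rintro w ⟨hw1, hw2⟩
      have hw1' : w ∈ openSegment ℝ p (pt A B 1) := by rwa [pt_one]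
      have hwend := crossing S p hp hgen hAB hVprop hcl1 he' hne hw2 hw1'
      obtain ⟨u, huI, hu⟩ := mem_openSegment_iff_pt.1 hw1
      have hwB : w ≠ B := by
        intro h
        rw [h] at hu
        have : (1:ℝ) = u := pt_left_injective hBp (by rw [← hu, pt_one])
        exact (ne_of_lt huI.2) this.symm
      have hwepts : w ∈ Epts S := by
        rcases hwend with h | h
        · exact h ▸ fst_mem_Epts he'
        · exact h ▸ snd_mem_Epts he'
      refine hgen w hwepts B hBepts hwB ?_
      rw [hu]
      exact collinear_of_pt u
    refine ⟨B, hBepts, ⟨e, he, hBe, hBvis⟩, Or.inl ⟨hBe, ?_⟩⟩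
    intro x hx
    rw [← hAB] at hx
    obtain ⟨sx, hsxI, hsx⟩ := mem_segment_iff_pt.1 hx
    have : cross p B x = (sx - 1) * cross p A B := by
      rw [hsx, ← cross_pt_pt p A B 1 sx, pt_one]
    rw [this]
    apply mul_nonpos_of_nonpos_of_nonneg _ hor
    linarith [hsxI.2]
  · -- Case 2 : visibility stops strictly before B
    have hblockall : ∀ t, ts < t → t ≤ 1 → ¬ VisPt S p e (pt A B t) := by
      intro t h1 h2 hv
      have : t ∈ V := ⟨⟨le_trans hts0 (le_of_lt h1), h2⟩, hv⟩
      exact absurd (le_csSup hVbdd this) (not_le.2 h1)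
    obtain ⟨e', he', hne, ⟨z, hz1, hz2⟩, ⟨tt, htt1, htt2, ⟨x, hx1, hx2⟩⟩⟩ :=
      blocker S p hdisj hp he hAB hts0 hcase hblockall
    set q0 : P := pt A B ts with hq0def
    have hq0seg : q0 ∈ Seg e := by rw [← hAB]; exact pt_mem_segment ⟨hts0, hts1⟩
    have hq0p : q0 ≠ p := fun h => hp e he (h ▸ hq0seg)
    have hzend := crossing S p hp hgen hAB hVprop htscl he' hne hz1 hz2
    set a : P := z with hadef
    have haepts : a ∈ Epts S := by
      rcases hzend with h | h
      · exact h ▸ fst_mem_Epts he'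
      · exact h ▸ snd_mem_Epts he'
    obtain ⟨u0, hu0I, hu0⟩ := mem_openSegment_iff_pt.1 hz2
    have hap : a ≠ p := by
      intro h
      have : (0:ℝ) = u0 := pt_left_injective hq0p (by rw [← hu0, pt_zero, ← h, hadef])
      exact (ne_of_lt hu0I.1) this
    have hABne : A ≠ B := by
      intro h
      obtain ⟨t1, ht1⟩ := hVne
      have h3 : pt A B tt = pt A B t1 := by rw [← h, pt_self, pt_self]
      exact hblockall tt htt1 htt2 (by rw [h3]; exact ht1.2)
    have hABcross : 0 < cross p A B := by
      rcases lt_or_eq_of_le hor with h | h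
      · exact h
      · exfalso
        exact hgen A hAepts B hBepts hABne (collinear_of_cross_eq_zero h.symm)
    have havis : ∀ f ∈ S, f ≠ e' → openSegment ℝ p a ∩ Seg f = ∅ := by
      intro f hf hfne
      rw [Set.eq_empty_iff_forall_notMem]
      rintro w ⟨hw1, hw2⟩
      obtain ⟨sw, hswI, hsw⟩ := mem_openSegment_iff_pt.1 hw1
      have hwopen : w ∈ openSegment ℝ p q0 := by
        rw [hsw, hu0, pt_pt]
        refine pt_mem_openSegment ⟨mul_pos hswI.1 hu0I.1, ?_⟩
        calc sw * u0 < 1 * u0 := by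
              apply mul_lt_mul_of_pos_right hswI.2 hu0I.1
          _ = u0 := one_mul u0
          _ < 1 := hu0I.2
      have hwa : w ≠ a := by
        intro h
        rw [h] at hsw
        have : (1:ℝ) = sw := pt_left_injective hap (by rw [← hsw, pt_one])
        exact (ne_of_lt hswI.2) this.symm
      by_cases hfe : f = e
      · subst hfe
        rw [← hAB] at hw2
        obtain ⟨sx, hsxI, hsx⟩ := mem_segment_iff_pt.1 hw2
        obtain ⟨v, hvI, hv⟩ := mem_openSegment_iff_pt.1 hwopen
        have hcr0 : cross p q0 w = 0 := by rw [hv, cross_right_pt]; simp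
        have hcr1 : cross p q0 w = (sx - ts) * cross p A B := by
          rw [hsx, hq0def, cross_pt_pt]
        have hsxts : sx = ts := by
          rw [hcr0] at hcr1
          rcases mul_eq_zero.1 hcr1.symm with h | h
          · linarith
          · exact absurd h (ne_of_gt hABcross)
        have hwq0 : w = q0 := by rw [hsx, hsxts, hq0def]
        rw [hwq0] at hv
        have : (1:ℝ) = v := pt_left_injective hq0p (by rw [← hv, pt_one])
        exact (ne_of_lt hvI.2) this.symm
      · have hwend := crossing S p hp hgen hAB hVprop htscl hf hfe hw2 hwopen
        have hwepts : w ∈ Epts S := by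
          rcases hwend with h | h
          · exact h ▸ fst_mem_Epts hf
          · exact h ▸ snd_mem_Epts hf
        refine hgen w hwepts a haepts hwa ?_
        rw [hsw]
        exact collinear_of_pt sw
    have haseg : a ∈ Seg e' := hz1
    refine ⟨a, haepts, ⟨e', he', hzend, havis⟩, Or.inr ⟨q0, hq0seg, hz2, ?_, ?_⟩⟩
    · intro e1 he1 hne1 w hw1 hw2
      exact crossing S p hp hgen hAB hVprop htscl he1 hne1 hw1 hw2
    · intro e1 he1 hne1 hae1
      have he1e' : e1 = e' := by
        by_contra h
        have hd := hdisj e1 he1 e' he' h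
        rw [Set.eq_empty_iff_forall_notMem] at hd
        exact hd a ⟨hae1, haseg⟩
      subst he1e'
      refine ⟨x, hx2, ?_⟩
      obtain ⟨ux, huxI, hux⟩ := mem_openSegment_iff_pt.1 hx1
      have hcx : cross p a x = u0 * ux * ((tt - ts) * cross p A B) := by
        rw [hu0, hux, cross_ray_ray, hq0def, cross_pt_pt]
      rw [hcx]
      apply mul_pos (mul_pos hu0I.1 huxI.1)
      exact mul_pos (by linarith) hABcross


lemma pt_right_injective {p c d : P} {u : ℝ} (hu : u ≠ 0) (h : pt p c u = pt p d u) :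
    c = d := by
  have h1 : (1-u)*p.1 + u*c.1 = (1-u)*p.1 + u*d.1 := congrArg Prod.fst h
  have h2 : (1-u)*p.2 + u*c.2 = (1-u)*p.2 + u*d.2 := congrArg Prod.snd h
  have hc1 : u * (c.1 - d.1) = 0 := by linarith
  have hc2 : u * (c.2 - d.2) = 0 := by linarith
  rcases mul_eq_zero.1 hc1 with h' | h'
  · exact absurd h' hu
  rcases mul_eq_zero.1 hc2 with h'' | h''
  · exact absurd h'' hu
  ext <;> linarith

lemma pt_ray_compare {p q1 q2 a : P} {u1 u2 : ℝ} (hu2 : u2 ≠ 0)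
    (h1 : a = pt p q1 u1) (h2 : a = pt p q2 u2) : q2 = pt p q1 (u1/u2) := by
  have hh : pt p q1 u1 = pt p q2 u2 := by rw [← h1, ← h2]
  have e1 : (1-u1)*p.1 + u1*q1.1 = (1-u2)*p.1 + u2*q2.1 := congrArg Prod.fst hh
  have e2 : (1-u1)*p.2 + u1*q1.2 = (1-u2)*p.2 + u2*q2.2 := congrArg Prod.snd hh
  ext
  · simp only [pt_fst]; field_simp; linarith
  · simp only [pt_snd]; field_simp; linarith

lemma endpoint_mem_seg {a : P} {e : P × P} (h : a = e.1 ∨ a = e.2) : a ∈ Seg e := by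
  rcases h with h | h
  · rw [h]; exact left_mem_segment ℝ e.1 e.2
  · rw [h]; exact right_mem_segment ℝ e.1 e.2

lemma inj
    (S : Finset (P × P)) (p : P)
    (hdisj : ∀ e ∈ S, ∀ e' ∈ S, e ≠ e' → Seg e ∩ Seg e' = ∅)
    (hp : ∀ e ∈ S, p ∉ Seg e)
    (hgen : ∀ a ∈ Epts S, ∀ b ∈ Epts S, a ≠ b → ¬ Collinear ℝ ({p, a, b} : Set P))
    {e1 e2 : P × P} (he1 : e1 ∈ S) (he2 : e2 ∈ S) (hne : e1 ≠ e2)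
    {a : P} (h1 : Inv S p e1 a) (h2 : Inv S p e2 a) : False := by
  obtain ⟨haepts, hvend1, hc1⟩ := h1
  obtain ⟨-, hvend2, hc2⟩ := h2
  have hdisj12 : Seg e1 ∩ Seg e2 = ∅ := hdisj e1 he1 e2 he2 hne
  rcases hc1 with ⟨hend1, hneg1⟩ | ⟨q1, hq1seg, haq1, hcf1, hstar1⟩
  · rcases hc2 with ⟨hend2, hneg2⟩ | ⟨q2, hq2seg, haq2, hcf2, hstar2⟩
    · -- both own endpoints : contradicts disjointness
      rw [Set.eq_empty_iff_forall_notMem] at hdisj12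
      exact hdisj12 a ⟨endpoint_mem_seg hend1, endpoint_mem_seg hend2⟩
    · -- C1 for e1, C2 for e2
      obtain ⟨x, hx, hxpos⟩ := hstar2 e1 he1 hne (endpoint_mem_seg hend1)
      exact absurd hxpos (not_lt.2 (hneg1 x hx))
  · rcases hc2 with ⟨hend2, hneg2⟩ | ⟨q2, hq2seg, haq2, hcf2, hstar2⟩
    · obtain ⟨x, hx, hxpos⟩ := hstar1 e2 he2 (Ne.symm hne) (endpoint_mem_seg hend2)
      exact absurd hxpos (not_lt.2 (hneg2 x hx))
    · -- both C2
      obtain ⟨u1, hu1I, hu1⟩ := mem_openSegment_iff_pt.1 haq1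
      obtain ⟨u2, hu2I, hu2⟩ := mem_openSegment_iff_pt.1 haq2
      have hq1q2 : q1 ≠ q2 := by
        intro h
        rw [Set.eq_empty_iff_forall_notMem] at hdisj12
        exact hdisj12 q1 ⟨hq1seg, h ▸ hq2seg⟩
      -- a is an endpoint of some segment, hence in Epts; get collinearity contradiction
      rcases lt_trichotomy u1 u2 with hu | hu | hu
      · -- q2 strictly between p and q1
        have hq2pt : q2 = pt p q1 (u1/u2) := pt_ray_compare (ne_of_gt hu2I.1) hu1 hu2
        have hq2open : q2 ∈ openSegment ℝ p q1 := by
          rw [hq2pt]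
          exact pt_mem_openSegment ⟨div_pos hu1I.1 hu2I.1, (div_lt_one hu2I.1).2 hu⟩
        have hq2end := hcf1 e2 he2 (Ne.symm hne) q2 hq2seg hq2open
        have hq2epts : q2 ∈ Epts S := by
          rcases hq2end with h | h
          · exact h ▸ fst_mem_Epts he2
          · exact h ▸ snd_mem_Epts he2
        have haq2' : a ≠ q2 := by
          intro h
          rw [h] at hu2
          have hq2p : q2 ≠ p := fun hq => hp e2 he2 (hq ▸ hq2seg)
          have : (1:ℝ) = u2 := pt_left_injective hq2p (by rw [← hu2, pt_one])
          exact (ne_of_lt hu2I.2) this.symm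
        refine hgen a haepts q2 hq2epts haq2' ?_
        have : Collinear ℝ ({p, pt p q2 u2, q2} : Set P) := collinear_of_pt u2
        rwa [← hu2] at this
      · -- equal parameters : q1 = q2, contradiction
        subst hu
        exact hq1q2 (pt_right_injective (ne_of_gt hu1I.1) (hu1 ▸ hu2))
      · -- q1 strictly between p and q2
        have hq1pt : q1 = pt p q2 (u2/u1) := pt_ray_compare (ne_of_gt hu1I.1) hu2 hu1
        have hq1open : q1 ∈ openSegment ℝ p q2 := by
          rw [hq1pt]
          exact pt_mem_openSegment ⟨div_pos hu2I.1 hu1I.1, (div_lt_one hu1I.1).2 hu⟩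
        have hq1end := hcf2 e1 he1 hne q1 hq1seg hq1open
        have hq1epts : q1 ∈ Epts S := by
          rcases hq1end with h | h
          · exact h ▸ fst_mem_Epts he1
          · exact h ▸ snd_mem_Epts he1
        have haq1' : a ≠ q1 := by
          intro h
          rw [h] at hu1
          have hq1p : q1 ≠ p := fun hq => hp e1 he1 (hq ▸ hq1seg)
          have : (1:ℝ) = u1 := pt_left_injective hq1p (by rw [← hu1, pt_one])
          exact (ne_of_lt hu1I.2) this.symm
        refine hgen a haepts q1 hq1epts haq1' ?_
        have : Collinear ℝ ({p, pt p q1 u1, q1} : Set P) := collinear_of_pt u1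
        rwa [← hu1] at this

end VisProof

/-- The number of visible endpoints is a 2-approximation of the number of
visible segments: `m_p ≤ ve_p ≤ 2 * m_p`.  Segments are given by their pairs
of endpoints, are pairwise disjoint, `p` lies on none of them, and no two
distinct endpoints are collinear with `p` (general position). -/
theorem visible_endpoints_two_approx
    (S : Finset ((ℝ × ℝ) × (ℝ × ℝ)))
    (hdisj : ∀ e ∈ S, ∀ e' ∈ S, e ≠ e' →
      segment ℝ e.1 e.2 ∩ segment ℝ e'.1 e'.2 = ∅)
    (p : ℝ × ℝ) (hp : ∀ e ∈ S, p ∉ segment ℝ e.1 e.2)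
    (hgen : ∀ a ∈ S.image Prod.fst ∪ S.image Prod.snd,
            ∀ b ∈ S.image Prod.fst ∪ S.image Prod.snd,
      a ≠ b → ¬ Collinear ℝ ({p, a, b} : Set (ℝ × ℝ)))
    (m_p ve_p : ℕ)
    (hm : m_p = (S.filter (fun e => ∃ q ∈ segment ℝ e.1 e.2, ∀ e' ∈ S, e' ≠ e →
      openSegment ℝ p q ∩ segment ℝ e'.1 e'.2 = ∅)).card)
    (hve : ve_p = ((S.image Prod.fst ∪ S.image Prod.snd).filter
      (fun a => ∃ e ∈ S, (a = e.1 ∨ a = e.2) ∧ ∀ e' ∈ S, e' ≠ e →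
        openSegment ℝ p a ∩ segment ℝ e'.1 e'.2 = ∅)).card) :
    m_p ≤ ve_p ∧ ve_p ≤ 2 * m_p := by
  subst hm hve
  have hdisj' : ∀ e ∈ S, ∀ e' ∈ S, e ≠ e' → VisProof.Seg e ∩ VisProof.Seg e' = ∅ := hdisj
  have hp' : ∀ e ∈ S, p ∉ VisProof.Seg e := hp
  have hgen' : ∀ a ∈ VisProof.Epts S, ∀ b ∈ VisProof.Epts S, a ≠ b →
      ¬ Collinear ℝ ({p, a, b} : Set (ℝ × ℝ)) := hgen
  constructor
  · -- m_p ≤ ve_p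
    apply Finset.card_le_card_of_injOn
      (fun e => if h : ∃ a, VisProof.Inv S p e a then h.choose else p)
    · intro e heF
      rw [Finset.mem_coe, Finset.mem_filter] at heF
      obtain ⟨heS, q, hq, hqvis⟩ := heF
      have hex : ∃ a, VisProof.Inv S p e a :=
        VisProof.key S p hdisj' hp' hgen' heS ⟨q, hq, fun e' h1 h2 => hqvis e' h1 h2⟩
      beta_reduce; rw [dif_pos hex]
      obtain ⟨hepts, hvend, -⟩ := hex.choose_spec
      rw [Finset.mem_coe, Finset.mem_filter]
      exact ⟨hepts, hvend⟩
    · intro e1 h1 e2 h2 heq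
      by_contra hne
      rw [Finset.mem_coe, Finset.mem_filter] at h1 h2
      obtain ⟨he1S, q1, hq1, hq1vis⟩ := h1
      obtain ⟨he2S, q2, hq2, hq2vis⟩ := h2
      have hex1 : ∃ a, VisProof.Inv S p e1 a :=
        VisProof.key S p hdisj' hp' hgen' he1S ⟨q1, hq1, fun e' ha hb => hq1vis e' ha hb⟩
      have hex2 : ∃ a, VisProof.Inv S p e2 a :=
        VisProof.key S p hdisj' hp' hgen' he2S ⟨q2, hq2, fun e' ha hb => hq2vis e' ha hb⟩
      simp only [] at heq
      rw [dif_pos hex1, dif_pos hex2] at heq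
      exact VisProof.inj S p hdisj' hp' hgen' he1S he2S hne
        hex1.choose_spec (heq ▸ hex2.choose_spec)
  · -- ve_p ≤ 2 * m_p
    set Fseg := S.filter (fun e => ∃ q ∈ segment ℝ e.1 e.2, ∀ e' ∈ S, e' ≠ e →
      openSegment ℝ p q ∩ segment ℝ e'.1 e'.2 = ∅) with hFseg
    set Fept := (S.image Prod.fst ∪ S.image Prod.snd).filter
      (fun a => ∃ e ∈ S, (a = e.1 ∨ a = e.2) ∧ ∀ e' ∈ S, e' ≠ e →
        openSegment ℝ p a ∩ segment ℝ e'.1 e'.2 = ∅) with hFept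
    set g : (ℝ × ℝ) → ((ℝ × ℝ) × (ℝ × ℝ)) := fun a =>
      if h : VisProof.VisEnd S p a then h.choose else (p, p) with hgdef
    have hmem : ∀ a ∈ Fept, VisProof.VisEnd S p a := by
      intro a ha
      rw [hFept, Finset.mem_filter] at ha
      exact ha.2
    have hgspec : ∀ a ∈ Fept, g a ∈ S ∧ (a = (g a).1 ∨ a = (g a).2) ∧
        ∀ e' ∈ S, e' ≠ g a → openSegment ℝ p a ∩ VisProof.Seg e' = ∅ := by
      intro a ha
      have hv := hmem a ha
      rw [hgdef]
      simp only [dif_pos hv]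
      exact hv.choose_spec
    have himg : Fept.image g ⊆ Fseg := by
      intro b hb
      rw [Finset.mem_image] at hb
      obtain ⟨a, ha, hab⟩ := hb
      obtain ⟨hgS, hgend, hgvis⟩ := hgspec a ha
      rw [hFseg, Finset.mem_filter]
      rw [← hab]
      exact ⟨hgS, a, VisProof.endpoint_mem_seg hgend, fun e' h1 h2 => hgvis e' h1 h2⟩
    have hfib := Finset.card_le_mul_card_image (f := g) Fept 2 ?_
    · calc Fept.card ≤ 2 * (Fept.image g).card := hfib
        _ ≤ 2 * Fseg.card := by
            apply Nat.mul_le_mul_left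
            exact Finset.card_le_card himg
    · intro b hb
      have hsub : Fept.filter (fun a => g a = b) ⊆ insert b.1 {b.2} := by
        intro a ha
        rw [Finset.mem_filter] at ha
        obtain ⟨haF, hab⟩ := ha
        obtain ⟨-, hgend, -⟩ := hgspec a haF
        rw [hab] at hgend
        rcases hgend with h | h
        · exact Finset.mem_insert.2 (Or.inl h)
        · exact Finset.mem_insert.2 (Or.inr (Finset.mem_singleton.2 h))
      calc (Fept.filter (fun a => g a = b)).card ≤ (insert b.1 ({b.2} : Finset (ℝ×ℝ))).card :=
            Finset.card_le_card hsub
        _ ≤ 2 := by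
            apply le_trans (Finset.card_insert_le _ _)
            simp
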